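/- arXiv:2201.06623 — 3 statements merged into one kernel-verified Lean document; each statement's English description precedes it below -/
import Mathlib

section
/- If $(a_n)_{n\in\mathbb{N}}$ is a sequence of real numbers with $a_n \in [0,1]$ for all $n$, then $a_n^n - \exp(-n(1-a_n)) \to 0$ as $n \to \infty$. -/
open Filter

lemma aux_pow_sub_pow_le1 {x b : ℝ} (hx : 0 ≤ x) (hxb : x ≤ b) (n : ℕ) :
    b ^ (n + 1) - x ^ (n + 1) ≤ (n + 1 : ℝ) * b ^ n * (b - x) := by
  induction n with
  | zero => simp
  | succ n ih =>
    have hb : 0 ≤ b := hx.trans hxb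
    have hxn : x ^ (n + 1) ≤ b ^ (n + 1) := pow_le_pow_left₀ hx hxb (n + 1)
    have h0 : 0 ≤ x ^ (n + 1) := pow_nonneg hx (n + 1)
    have hbn : 0 ≤ b ^ n := pow_nonneg hb n
    calc b ^ (n + 2) - x ^ (n + 2)
        = b * (b ^ (n+1) - x ^ (n+1)) + x ^ (n+1) * (b - x) := by ring
      _ ≤ b * ((n + 1 : ℝ) * b ^ n * (b - x)) + b ^ (n+1) * (b - x) := by
          gcongr
      _ = ((n + 1 : ℝ) + 1) * b ^ (n + 1) * (b - x) := by ring
      _ = (↑(n + 1) + 1 : ℝ) * b ^ (n + 1) * (b - x) := by push_cast; ring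

lemma aux_pow_sub_pow_le {x b : ℝ} (hx : 0 ≤ x) (hxb : x ≤ b) (n : ℕ) :
    b ^ n - x ^ n ≤ n * b ^ (n - 1) * (b - x) := by
  cases n with
  | zero => simp
  | succ m =>
    have := aux_pow_sub_pow_le1 hx hxb m
    simpa using this

lemma aux_exp_sq (s : ℝ) (hs : 0 ≤ s) : Real.exp (-s) * s ^ 2 ≤ 4 := by
  have h := Real.add_one_le_exp (s / 2)
  have h2 : s ^ 2 ≤ 4 * Real.exp s := by
    have he : Real.exp s = Real.exp (s/2) * Real.exp (s/2) := by
      rw [← Real.exp_add]; ring_nf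
    nlinarith [Real.exp_pos (s/2)]
  have hp := Real.exp_pos s
  rw [Real.exp_neg, inv_mul_le_iff₀ hp]
  linarith

theorem stmt0 (a : ℕ → ℝ) (ha : ∀ n, a n ∈ Set.Icc (0 : ℝ) 1) :
    Tendsto (fun n : ℕ => (a n) ^ n - Real.exp (-(n : ℝ) * (1 - a n))) atTop (nhds 0) := by
  have key : ∀ n : ℕ, 2 ≤ n →
      ‖a n ^ n - Real.exp (-(n : ℝ) * (1 - a n))‖ ≤ 16 / n := by
    intro n hn
    obtain ⟨hx0, hx1⟩ := ha n
    set x := a n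
    set b := Real.exp (x - 1) with hbdef
    have hxb : x ≤ b := by
      have := Real.add_one_le_exp (x - 1)
      linarith
    have hb0 : 0 < b := Real.exp_pos _
    have hexp : Real.exp (-(n : ℝ) * (1 - x)) = b ^ n := by
      rw [hbdef, ← Real.exp_nat_mul]; ring_nf
    have hD0 : x ^ n ≤ b ^ n := pow_le_pow_left₀ hx0 hxb n
    -- b - x ≤ (1-x)^2
    have hbx : b - x ≤ (1 - x) ^ 2 := by
      have h1 : b ≤ 1 / (1 + (1 - x)) := by
        rw [le_div_iff₀ (by linarith)]
        have h2 := Real.add_one_le_exp (1 - x)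
        have h3 : b * Real.exp (1 - x) = 1 := by
          rw [hbdef, ← Real.exp_add]; ring_nf; exact Real.exp_zero
        nlinarith
      have h4 : 1 / (1 + (1 - x)) - x ≤ (1 - x) ^ 2 := by
        rw [div_sub' (by linarith : (1 : ℝ) + (1 - x) ≠ 0),
          div_le_iff₀ (by linarith)]
        nlinarith
      linarith
    have hn1 : (1 : ℝ) ≤ (n : ℝ) - 1 := by
      have : (2 : ℝ) ≤ n := by exact_mod_cast hn
      linarith
    have hbn1 : b ^ (n - 1) * (1 - x) ^ 2 ≤ 4 / ((n : ℝ) - 1) ^ 2 := by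
      have hcast : ((n - 1 : ℕ) : ℝ) = (n : ℝ) - 1 := by
        have h1n : 1 ≤ n := by omega
        push_cast [h1n]; ring
      have hbe : b ^ (n - 1) = Real.exp (-(((n : ℝ) - 1) * (1 - x))) := by
        rw [hbdef, ← Real.exp_nat_mul, hcast]; ring_nf
      have hs : 0 ≤ ((n : ℝ) - 1) * (1 - x) := by nlinarith
      have h5 := aux_exp_sq (((n : ℝ) - 1) * (1 - x)) hs
      have hne : (0 : ℝ) < ((n : ℝ) - 1) ^ 2 := by nlinarith
      rw [hbe, le_div_iff₀ hne]
      calc Real.exp (-(((n : ℝ) - 1) * (1 - x))) * (1 - x) ^ 2 * ((n:ℝ) - 1) ^ 2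
          = Real.exp (-(((n : ℝ) - 1) * (1 - x))) * (((n : ℝ) - 1) * (1 - x)) ^ 2 := by ring
        _ ≤ 4 := h5
    have hD : b ^ n - x ^ n ≤ (n : ℝ) * (4 / ((n : ℝ) - 1) ^ 2) := by
      calc b ^ n - x ^ n ≤ n * b ^ (n - 1) * (b - x) := aux_pow_sub_pow_le hx0 hxb n
        _ ≤ n * b ^ (n - 1) * (1 - x) ^ 2 := by
            have hnn : (0:ℝ) ≤ (n : ℝ) * b ^ (n-1) :=
              mul_nonneg (Nat.cast_nonneg n) (pow_nonneg hb0.le _)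
            nlinarith
        _ = (n : ℝ) * (b ^ (n - 1) * (1 - x) ^ 2) := by ring
        _ ≤ (n : ℝ) * (4 / ((n : ℝ) - 1) ^ 2) := by gcongr
    have hfinal : (n : ℝ) * (4 / ((n : ℝ) - 1) ^ 2) ≤ 16 / n := by
      have hn2 : (2 : ℝ) ≤ n := by exact_mod_cast hn
      have heq : (n : ℝ) * (4 / ((n : ℝ) - 1) ^ 2) = 4 * n / ((n : ℝ) - 1) ^ 2 := by ring
      rw [heq, div_le_div_iff₀ (by nlinarith) (by linarith)]
      nlinarith [sq_nonneg ((n : ℝ) - 2)]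
    rw [hexp, Real.norm_eq_abs, abs_sub_comm, abs_of_nonneg (by linarith)]
    linarith
  refine squeeze_zero_norm' ?_ (tendsto_const_div_atTop_nhds_zero_nat 16)
  filter_upwards [eventually_ge_atTop 2] with n hn using key n hn
end

section
/- Let $B \subseteq \mathbb{Z}^d$ be a finite nonempty set, let $\prec$ be a translation invariant strict total order on $\mathbb{Z}^d$, and let $b_1$ be the $\prec$-minimum of $B$. Let $m \in \mathbb{N}$ be large enough that $b_j - b_i \in A_0^{(m)}$ for all $i < j$, where $A_0^{(m)} = \{z \in [-m,m]^d \cap \mathbb{Z}^d : 0 \prec z\}$ and $B = \{b_1 \prec b_2 \prec \cdots \prec b_{|B|}\}$. Then $(A_0^{(m)} \cup \{0\}) \oplus B = (A_0^{(m)} \oplus B) \cup \{b_1\}$ and $b_1 \notin A_0^{(m)} \oplus B$. -/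
open scoped Pointwise

theorem stmt5 {d m : ℕ}
    (r : (Fin d → ℤ) → (Fin d → ℤ) → Prop) [IsStrictTotalOrder (Fin d → ℤ) r]
    (hinv : ∀ u v w : Fin d → ℤ, r u v ↔ r (u + w) (v + w))
    (B : Finset (Fin d → ℤ)) (hB : B.Nonempty)
    (b1 : Fin d → ℤ) (hb1 : b1 ∈ B)
    (hmin : ∀ b ∈ B, b ≠ b1 → r b1 b)
    (A0 : Set (Fin d → ℤ))
    (hA0 : A0 = {z | (∀ i, |z i| ≤ (m : ℤ)) ∧ r 0 z})
    (hm : ∀ x ∈ B, ∀ y ∈ B, r x y → y - x ∈ A0) :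
    (A0 ∪ {0}) + (B : Set (Fin d → ℤ)) = (A0 + (B : Set (Fin d → ℤ))) ∪ {b1}
      ∧ b1 ∉ A0 + (B : Set (Fin d → ℤ)) := by
  have hnot : b1 ∉ A0 + (B : Set (Fin d → ℤ)) := by
    rintro ⟨a, ha, b, hb, hab⟩
    have hra : r 0 a := (hA0 ▸ ha).2
    have : r b b1 := by
      have := (hinv 0 a b).mp hra
      simpa [hab, add_comm] using this
    rcases eq_or_ne b b1 with rfl | hne
    · exact irrefl_of r b this
    · exact asymm_of r (hmin b hb hne) this
  refine ⟨?_, hnot⟩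
  ext x
  constructor
  · rintro ⟨a, ha, b, hb, rfl⟩
    rcases ha with ha | ha
    · exact Or.inl ⟨a, ha, b, hb, rfl⟩
    · simp only [Set.mem_singleton_iff] at ha
      subst ha
      rcases eq_or_ne b b1 with rfl | hne
      · simp
      · have : b - b1 ∈ A0 := hm b1 hb1 b hb (hmin b hb hne)
        exact Or.inl ⟨b - b1, this, b1, hb1, by simp⟩
  · rintro (⟨a, ha, b, hb, rfl⟩ | hx)
    · exact ⟨a, Or.inl ha, b, hb, rfl⟩
    · simp only [Set.mem_singleton_iff] at hx
      exact ⟨0, Or.inr rfl, x, hx ▸ hb1, by simp⟩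
end

section
/- Let $(\xi_v)_{v\in\mathbb{Z}^d}$ be a stationary random field, let $\prec$ be a translation invariant strict total order on $\mathbb{Z}^d$, let $H$ be a finite subset of $\mathbb{Z}^d$, and let $A_v = \{z \in v + T : v \prec z\}$ for a fixed finite set $T \subseteq \mathbb{Z}^d$ containing $H - H$. Then $\mathbb{P}(\max_{v\in H}\xi_v > x) \ge |H|\,\mathbb{P}(\max_{z \in A_0}\xi_z \le x < \xi_0)$ for every $x \in \mathbb{R}$, where $A_0 = \{z \in T : 0 \prec z\}$. -/
open MeasureTheory ProbabilityTheory

theorem stmt8 {d : ℕ} {Ω : Type*} [MeasureSpace Ω] [IsProbabilityMeasure (ℙ : Measure Ω)]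
    (ξ : (Fin d → ℤ) → Ω → ℝ)
    (hmeas : ∀ v, Measurable (ξ v))
    (hstat : ∀ w : Fin d → ℤ,
      Measure.map (fun ω (v : Fin d → ℤ) => ξ (v + w) ω) ℙ
        = Measure.map (fun ω (v : Fin d → ℤ) => ξ v ω) ℙ)
    (r : (Fin d → ℤ) → (Fin d → ℤ) → Prop) [IsStrictTotalOrder (Fin d → ℤ) r]
    (hinv : ∀ u v w : Fin d → ℤ, r u v ↔ r (u + w) (v + w))
    (H T : Finset (Fin d → ℤ))
    (hT : ∀ u ∈ H, ∀ u' ∈ H, u - u' ∈ T)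
    (x : ℝ) :
    (H.card : ENNReal) * ℙ {ω | (∀ z ∈ T, r 0 z → ξ z ω ≤ x) ∧ x < ξ 0 ω}
      ≤ ℙ {ω | ∃ v ∈ H, x < ξ v ω} := by
  classical
  set S : Set ((Fin d → ℤ) → ℝ) :=
    {f | (∀ t ∈ T, r 0 t → f t ≤ x) ∧ x < f 0} with hS
  have hSmeas : MeasurableSet S := by
    have h1 : MeasurableSet {f : (Fin d → ℤ) → ℝ | ∀ t ∈ T, r 0 t → f t ≤ x} := by
      have he : {f : (Fin d → ℤ) → ℝ | ∀ t ∈ T, r 0 t → f t ≤ x}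
          = ⋂ t ∈ T, ⋂ (_ : r 0 t), {f | f t ≤ x} := by
        ext f; simp [Set.mem_iInter]
      rw [he]
      refine MeasurableSet.biInter T.countable_toSet fun t _ => ?_
      exact MeasurableSet.iInter fun _ =>
        measurableSet_le (measurable_pi_apply t) measurable_const
    have h2 : MeasurableSet {f : (Fin d → ℤ) → ℝ | x < f 0} :=
      measurableSet_lt measurable_const (measurable_pi_apply 0)
    exact h1.inter h2
  have hmapmeas : ∀ v : Fin d → ℤ, Measurable (fun ω (u : Fin d → ℤ) => ξ (u + v) ω) :=
    fun v => measurable_pi_lambda _ fun u => hmeas (u + v)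
  set B : (Fin d → ℤ) → Set Ω := fun v => (fun ω (u : Fin d → ℤ) => ξ (u + v) ω) ⁻¹' S with hB
  have hBmeas : ∀ v, MeasurableSet (B v) := fun v => (hmapmeas v) hSmeas
  have hBprob : ∀ v, ℙ (B v) = ℙ {ω | (∀ z ∈ T, r 0 z → ξ z ω ≤ x) ∧ x < ξ 0 ω} := by
    intro v
    have h1 : ℙ (B v) = Measure.map (fun ω (u : Fin d → ℤ) => ξ (u + v) ω) ℙ S :=
      (Measure.map_apply (hmapmeas v) hSmeas).symm
    rw [h1, hstat v, Measure.map_apply (measurable_pi_lambda _ fun u => hmeas u) hSmeas]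
    rfl
  have hdisj : (H : Set (Fin d → ℤ)).PairwiseDisjoint B := by
    have key : ∀ a b : Fin d → ℤ, a ∈ H → b ∈ H → r a b → Disjoint (B a) (B b) := by
      intro a b ha hb hab
      rw [Set.disjoint_left]
      intro ω hωa hωb
      have hωa' : (∀ t ∈ T, r 0 t → ξ (t + a) ω ≤ x) ∧ x < ξ (0 + a) ω := hωa
      have hωb' : (∀ t ∈ T, r 0 t → ξ (t + b) ω ≤ x) ∧ x < ξ (0 + b) ω := hωb
      have hmem : b - a ∈ T := hT b hb a ha
      have hr : r 0 (b - a) := by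
        rw [hinv 0 (b - a) a]
        simpa using hab
      have h1 : ξ ((b - a) + a) ω ≤ x := hωa'.1 _ hmem hr
      have h2 : x < ξ (0 + b) ω := hωb'.2
      rw [sub_add_cancel] at h1
      rw [zero_add] at h2
      exact absurd h2 (not_lt.2 h1)
    intro v hv w hw hvw
    rcases trichotomous_of r v w with h | h | h
    · exact key v w hv hw h
    · exact absurd h hvw
    · exact (key w v hw hv h).symm
  have hsub : (⋃ v ∈ H, B v) ⊆ {ω | ∃ v ∈ H, x < ξ v ω} := by
    intro ω hω
    simp only [Set.mem_iUnion] at hω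
    obtain ⟨v, hv, hωv⟩ := hω
    have hωv' : (∀ t ∈ T, r 0 t → ξ (t + v) ω ≤ x) ∧ x < ξ (0 + v) ω := hωv
    exact ⟨v, hv, by simpa using hωv'.2⟩
  calc (H.card : ENNReal) * ℙ {ω | (∀ z ∈ T, r 0 z → ξ z ω ≤ x) ∧ x < ξ 0 ω}
      = ∑ v ∈ H, ℙ (B v) := by
        simp [hBprob, Finset.sum_const, nsmul_eq_mul]
    _ = ℙ (⋃ v ∈ H, B v) := (measure_biUnion_finset hdisj fun v _ => hBmeas v).symm
    _ ≤ ℙ {ω | ∃ v ∈ H, x < ξ v ω} := measure_mono hsub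
end
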